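/- For every integer d ≥ 3 there exist an irreducible polynomial g ∈ k[x₁,x₂,x₃] of degree d and two points R₁, R₂ ∈ V(g) ⊆ 𝔸³(k) such that {R₁, R₂} ∪ {x ∈ 𝔸³ : g(x) ≠ 0} is a Kakeya subset of 𝔸³(k). -/

import Mathlib

/-- A subset `E ⊆ 𝔸ⁿ(k) = kⁿ` is a Kakeya subset if for every nonzero direction `v`
there is a point `p` such that the line `{p + t • v : t ∈ k}` is contained in `E`. -/
def IsKakeya {k : Type*} [Field k] {n : ℕ} (E : Set (Fin n → k)) : Prop :=
  ∀ v : Fin n → k, v ≠ 0 → ∃ p : Fin n → k, ∀ t : k, p + t • v ∈ E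

open MvPolynomial

/-- `X 0` is prime in `k[x,y]`. -/
lemma myPrimeX0 {k : Type*} [Field k] : Prime (X 0 : MvPolynomial (Fin 2) k) := by
  have h := MulEquiv.prime_iff (MvPolynomial.finSuccEquiv k 1).toRingEquiv.toMulEquiv
    (p := (X 0 : MvPolynomial (Fin 2) k))
  rw [← h]
  have hx : (MvPolynomial.finSuccEquiv k 1).toRingEquiv.toMulEquiv (X 0 : MvPolynomial (Fin 2) k)
      = (Polynomial.X : Polynomial (MvPolynomial (Fin 1) k)) := MvPolynomial.finSuccEquiv_X_zero
  rw [hx]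
  exact Polynomial.prime_X

/-- The linear (in the outer variable) polynomial `x₀^e · Y - x₁^{e+1}` over `k[x₀,x₁]`
is irreducible, since its coefficients are coprime. -/
lemma myLinIrred {k : Type*} [Field k] (e : ℕ) :
    Irreducible (Polynomial.C ((X 0 : MvPolynomial (Fin 2) k) ^ e) * Polynomial.X
      + Polynomial.C (-((X 1 : MvPolynomial (Fin 2) k) ^ (e + 1)))) := by
  set a : MvPolynomial (Fin 2) k := X 0 ^ e with ha'
  set b : MvPolynomial (Fin 2) k := -(X 1 ^ (e + 1)) with hb'
  have ha : a ≠ 0 := pow_ne_zero _ (MvPolynomial.X_ne_zero 0)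
  set P : Polynomial (MvPolynomial (Fin 2) k) := Polynomial.C a * Polynomial.X + Polynomial.C b
    with hP'
  have hdeg : P.natDegree = 1 := Polynomial.natDegree_linear ha
  have hP0 : P ≠ 0 := fun h => by simp [h] at hdeg
  -- helper: any degree-0 divisor of P is a unit
  have unit_of : ∀ z : Polynomial (MvPolynomial (Fin 2) k),
      z ∣ P → z.natDegree = 0 → IsUnit z := by
    intro z hz hz0
    obtain ⟨r, rfl⟩ := Polynomial.natDegree_eq_zero.mp hz0
    rw [Polynomial.isUnit_C]
    have hco := (Polynomial.C_dvd_iff_dvd_coeff r P).mp hz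
    have h1 : r ∣ a := by have := hco 1; simpa [hP'] using this
    have h0 : r ∣ (X 1 : MvPolynomial (Fin 2) k) ^ (e + 1) := by
      have := hco 0
      simp only [hP', Polynomial.coeff_add, Polynomial.coeff_C_mul, Polynomial.coeff_X_zero,
        mul_zero, Polynomial.coeff_C, if_pos rfl, zero_add] at this
      exact (dvd_neg.mp this)
    obtain ⟨i, hi, hassoc⟩ := (dvd_prime_pow myPrimeX0 e).mp (ha' ▸ h1)
    rcases Nat.eq_zero_or_pos i with rfl | hpos
    · exact hassoc.symm.isUnit (by simp)
    · exfalso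
      have hXr : (X 0 : MvPolynomial (Fin 2) k) ∣ r :=
        dvd_trans (dvd_pow_self _ hpos.ne') hassoc.symm.dvd
      have : (X 0 : MvPolynomial (Fin 2) k) ∣ X 1 :=
        myPrimeX0.dvd_of_dvd_pow (dvd_trans hXr h0)
      rw [MvPolynomial.X_dvd_X] at this
      exact absurd this (by decide)
  constructor
  · intro hu
    have := Polynomial.natDegree_eq_zero_of_isUnit hu
    omega
  · intro u w huw
    have hu0 : u ≠ 0 := fun h => hP0 (by simp [huw, h])
    have hw0 : w ≠ 0 := fun h => hP0 (by simp [huw, h])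
    have hsum : u.natDegree + w.natDegree = 1 := by
      rw [← Polynomial.natDegree_mul hu0 hw0, ← huw, hdeg]
    rcases Nat.eq_zero_or_pos u.natDegree with h | h
    · exact Or.inl (unit_of u ⟨w, huw⟩ h)
    · exact Or.inr (unit_of w ⟨u, by rw [huw, mul_comm]⟩ (by omega))

/-- `x₀ x₁^e - x₂^{e+1}` is irreducible. -/
lemma myIrred {k : Type*} [Field k] (e : ℕ) :
    Irreducible (X 0 * X 1 ^ e - X 2 ^ (e + 1) : MvPolynomial (Fin 3) k) := by
  have himg : (MvPolynomial.finSuccEquiv k 2) (X 0 * X 1 ^ e - X 2 ^ (e + 1) :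
      MvPolynomial (Fin 3) k)
      = Polynomial.C ((X 0 : MvPolynomial (Fin 2) k) ^ e) * Polynomial.X
        + Polynomial.C (-((X 1 : MvPolynomial (Fin 2) k) ^ (e + 1))) := by
    have h1 : (X 1 : MvPolynomial (Fin 3) k) = X (Fin.succ 0) := rfl
    have h2 : (X 2 : MvPolynomial (Fin 3) k) = X (Fin.succ 1) := rfl
    rw [map_sub, map_mul, map_pow, map_pow, h1, h2, MvPolynomial.finSuccEquiv_X_zero,
      MvPolynomial.finSuccEquiv_X_succ, MvPolynomial.finSuccEquiv_X_succ]
    rw [← Polynomial.C_pow, ← Polynomial.C_pow, map_neg]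
    ring
  have := (MulEquiv.irreducible_iff
    (MvPolynomial.finSuccEquiv k 2).toRingEquiv.toMulEquiv
    (x := (X 0 * X 1 ^ e - X 2 ^ (e + 1) : MvPolynomial (Fin 3) k))).mp
  apply this
  have hx : (MvPolynomial.finSuccEquiv k 2).toRingEquiv.toMulEquiv
      (X 0 * X 1 ^ e - X 2 ^ (e + 1) : MvPolynomial (Fin 3) k)
      = (MvPolynomial.finSuccEquiv k 2) (X 0 * X 1 ^ e - X 2 ^ (e + 1) :
        MvPolynomial (Fin 3) k) := rfl
  rw [hx, himg]
  exact myLinIrred e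

/-- `x₀ x₁^e - x₂^{e+1}` has total degree `e + 1`. -/
lemma myTdeg {k : Type*} [Field k] (e : ℕ) :
    (X 0 * X 1 ^ e - X 2 ^ (e + 1) : MvPolynomial (Fin 3) k).totalDegree = e + 1 := by
  apply le_antisymm
  · refine (totalDegree_sub _ _).trans (max_le ?_ ?_)
    · refine (totalDegree_mul _ _).trans ?_
      rw [totalDegree_X, totalDegree_X_pow]
      omega
    · rw [totalDegree_X_pow]
  · have hc : coeff (Finsupp.single 2 (e + 1))
        (X 0 * X 1 ^ e - X 2 ^ (e + 1) : MvPolynomial (Fin 3) k) = -1 := by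
      have h1 : (X 0 * X 1 ^ e : MvPolynomial (Fin 3) k)
          = monomial (Finsupp.single 0 1 + Finsupp.single 1 e) 1 := by
        rw [X_pow_eq_monomial, X, monomial_mul, one_mul]
      have h2 : (X 2 ^ (e + 1) : MvPolynomial (Fin 3) k)
          = monomial (Finsupp.single 2 (e + 1)) 1 := X_pow_eq_monomial
      rw [coeff_sub, h1, h2, coeff_monomial, coeff_monomial, if_pos rfl, if_neg, zero_sub]
      intro h
      have := DFunLike.congr_fun h 0
      simp [Finsupp.single_apply] at this
    have hsupp : Finsupp.single 2 (e + 1) ∈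
        (X 0 * X 1 ^ e - X 2 ^ (e + 1) : MvPolynomial (Fin 3) k).support :=
      mem_support_iff.mpr (by rw [hc]; norm_num)
    have := le_totalDegree hsupp
    have hs : (Finsupp.single (2 : Fin 3) (e + 1)).sum (fun _ n => n) = e + 1 :=
      Finsupp.sum_single_index rfl
    rwa [hs] at this

/-- For every `d ≥ 3` there exist an irreducible polynomial `g ∈ k[x₁,x₂,x₃]` of degree `d`
and two points `R₁, R₂` on `V(g)` such that `{R₁, R₂} ∪ {g ≠ 0}` is a Kakeya subset of
`𝔸³(k)`. -/
theorem exists_kakeya_two_points_union_nonvanishing {k : Type*} [Field k] [IsAlgClosed k]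
    (d : ℕ) (hd : 3 ≤ d) :
    ∃ (g : MvPolynomial (Fin 3) k) (R₁ R₂ : Fin 3 → k),
      Irreducible g ∧ g.totalDegree = d ∧ R₁ ≠ R₂ ∧
      MvPolynomial.eval R₁ g = 0 ∧ MvPolynomial.eval R₂ g = 0 ∧
      IsKakeya ({R₁, R₂} ∪ {x : Fin 3 → k | MvPolynomial.eval x g ≠ 0}) := by
  obtain ⟨e, rfl⟩ : ∃ e, d = e + 1 := ⟨d - 1, by omega⟩
  have he : 2 ≤ e := by omega
  have he0 : e ≠ 0 := by omega
  set g : MvPolynomial (Fin 3) k := X 0 * X 1 ^ e - X 2 ^ (e + 1) with hg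
  have evalg : ∀ x : Fin 3 → k, eval x g = x 0 * x 1 ^ e - x 2 ^ (e + 1) := by
    intro x; simp [hg]
  set R₂ : Fin 3 → k := fun i => if i = 0 then 1 else 0 with hR₂
  refine ⟨g, 0, R₂, myIrred e, myTdeg e, ?_, ?_, ?_, ?_⟩
  · intro h
    have := congrFun h 0
    simp [hR₂] at this
  · rw [evalg]; simp [zero_pow he0]
  · rw [evalg]; simp [hR₂, zero_pow he0]
  · intro v hv
    by_cases h1 : eval v g ≠ 0
    · -- the polynomial is homogeneous: the line through the origin in direction `v`
      -- meets `V(g)` only at the origin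
      refine ⟨0, fun t => ?_⟩
      rcases eq_or_ne t 0 with rfl | ht
      · left; left; simp
      · right
        show eval (0 + t • v) g ≠ 0
        have hco : (0 + t • v : Fin 3 → k) = fun i => t * v i := by
          funext i; simp
        rw [hco, evalg]
        have hid : t * v 0 * (t * v 1) ^ e - (t * v 2) ^ (e + 1)
            = t ^ (e + 1) * (v 0 * v 1 ^ e - v 2 ^ (e + 1)) := by ring
        rw [hid, ← evalg v]
        exact mul_ne_zero (pow_ne_zero _ ht) h1
    · push_neg at h1
      by_cases h2 : v 1 ≠ 0
      · -- direction on the cone with `v 1 ≠ 0`: the line through `R₂` works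
        refine ⟨R₂, fun t => ?_⟩
        rcases eq_or_ne t 0 with rfl | ht
        · left; right; simp
        · right
          show eval (R₂ + t • v) g ≠ 0
          have hco : (R₂ + t • v : Fin 3 → k)
              = fun i => (if i = 0 then (1 : k) else 0) + t * v i := by
            funext i; simp [hR₂]
          rw [hco, evalg]
          simp only [show ((0 : Fin 3) = 0) = True by simp, if_true,
            show ((1 : Fin 3) = 0) = False by simp, show ((2 : Fin 3) = 0) = False by simp,
            if_false, zero_add]
          have hid : (1 + t * v 0) * (t * v 1) ^ e - (t * v 2) ^ (e + 1)
              = t ^ e * v 1 ^ e + t ^ (e + 1) * (v 0 * v 1 ^ e - v 2 ^ (e + 1)) := by ring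
          rw [hid, ← evalg v, h1, mul_zero, add_zero]
          exact mul_ne_zero (pow_ne_zero _ ht) (pow_ne_zero _ h2)
      · -- then `v = (v 0, 0, 0)` and a line in the plane `x₁ = 0, x₂ = 1` avoids `V(g)`
        push_neg at h2
        have hv2 : v 2 = 0 := by
          have h := evalg v
          rw [h1, h2, zero_pow he0, mul_zero, zero_sub, eq_comm, neg_eq_zero] at h
          exact pow_eq_zero_iff (by omega) |>.mp h
        refine ⟨(fun i => if i = 2 then 1 else 0), fun t => ?_⟩
        right
        show eval _ g ≠ 0
        have hco : ((fun i => if i = 2 then (1 : k) else 0) + t • v : Fin 3 → k)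
            = fun i => (if i = 2 then (1 : k) else 0) + t * v i := by
          funext i; simp
        rw [hco, evalg]
        simp only [show ((0 : Fin 3) = 2) = False by simp, show ((1 : Fin 3) = 2) = False by simp,
          show ((2 : Fin 3) = 2) = True by simp, if_true, if_false, zero_add]
        rw [h2, hv2]
        simp [zero_pow he0]
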